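/- arXiv:2007.02261 — 16 statements merged into one kernel-verified Lean document; each statement's English description precedes it below -/
import Mathlib

section
/- Transitivity of correspondence under relational composition: If (ρ₁,p₁) ⊒_r (ρ₂,p₂) and (ρ₂,p₂) ⊒_s (ρ₃,p₃), then (ρ₁,p₁) ⊒_{r∘s} (ρ₃,p₃), where r∘s = {(a,b) | ∃ c, (a,c) ∈ r ∧ (c,b) ∈ s} is the relational composition. -/
inductive Lang (α : Type) : Type
  | skip : Lang α
  | basic : (α → α) → Lang α
  | cjump : (α → Prop) → ℕ → Lang α → Lang α
  | while : (α → Prop) → Lang α → Lang α → Lang α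
  | ite : (α → Prop) → Lang α → Lang α → Lang α
  | seq : Lang α → Lang α → Lang α
  | par : List (Lang α) → Lang α
  | await : (α → Prop) → Lang α → Lang α

inductive PStep {α : Type} (ρ : ℕ → Lang α) : Lang α × α → Lang α × α → Prop
  | basic {f : α → α} {σ : α} : PStep ρ (Lang.basic f, σ) (Lang.skip, f σ)
  | cjumpT {C : α → Prop} {i : ℕ} {p : Lang α} {σ : α} (h : C σ) :
      PStep ρ (Lang.cjump C i p, σ) (ρ i, σ)
  | cjumpF {C : α → Prop} {i : ℕ} {p : Lang α} {σ : α} (h : ¬ C σ) :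
      PStep ρ (Lang.cjump C i p, σ) (p, σ)
  | await {C : α → Prop} {p : Lang α} {σ σ' : α} (h : C σ)
      (n : ℕ) (f : ℕ → Lang α × α)
      (h0 : f 0 = (p, σ)) (hn : f n = (Lang.skip, σ'))
      (hstep : ∀ i, i < n → PStep ρ (f i) (f (i + 1))) :
      PStep ρ (Lang.await C p, σ) (Lang.skip, σ')
  | iteT {C : α → Prop} {p₁ p₂ : Lang α} {σ : α} (h : C σ) :
      PStep ρ (Lang.ite C p₁ p₂, σ) (p₁, σ)
  | iteF {C : α → Prop} {p₁ p₂ : Lang α} {σ : α} (h : ¬ C σ) :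
      PStep ρ (Lang.ite C p₁ p₂, σ) (p₂, σ)
  | whileT {C : α → Prop} {p₁ p₂ : Lang α} {σ : α} (h : C σ) :
      PStep ρ (Lang.while C p₁ p₂, σ)
        (Lang.seq p₁ (Lang.seq Lang.skip (Lang.while C p₁ p₂)), σ)
  | whileF {C : α → Prop} {p₁ p₂ : Lang α} {σ : α} (h : ¬ C σ) :
      PStep ρ (Lang.while C p₁ p₂, σ) (p₂, σ)
  | seq {p₁ p₁' p₂ : Lang α} {σ σ' : α} (h : PStep ρ (p₁, σ) (p₁', σ')) :
      PStep ρ (Lang.seq p₁ p₂, σ) (Lang.seq p₁' p₂, σ')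
  | seqSkip {p : Lang α} {σ : α} : PStep ρ (Lang.seq Lang.skip p, σ) (p, σ)
  | par {ps : List (Lang α)} {i : ℕ} {p' : Lang α} {σ σ' : α}
      (hi : i < ps.length) (h : PStep ρ (ps.get ⟨i, hi⟩, σ) (p', σ')) :
      PStep ρ (Lang.par ps, σ) (Lang.par (ps.set i p'), σ')
  | parSkip {ps : List (Lang α)} {σ : α} (hne : ps ≠ [])
      (h : ∀ p ∈ ps, p = Lang.skip) :
      PStep ρ (Lang.par ps, σ) (Lang.skip, σ)

def IsSimulation {α β : Type} (ρ : ℕ → Lang α) (ρ' : ℕ → Lang β)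
    (r : α → β → Prop) (X : Lang α → Lang β → Prop) : Prop :=
  (∀ p q σ₁ σ₂ q' σ₂', X p q → r σ₁ σ₂ → PStep ρ' (q, σ₂) (q', σ₂') →
      ∃ p' σ₁', PStep ρ (p, σ₁) (p', σ₁') ∧ X p' q' ∧ r σ₁' σ₂') ∧
  (∀ q, X Lang.skip q → q = Lang.skip) ∧
  (∀ p, X p Lang.skip → p = Lang.skip)

def Corr {α β : Type} (ρ : ℕ → Lang α) (p : Lang α) (r : α → β → Prop)
    (ρ' : ℕ → Lang β) (q : Lang β) : Prop :=
  ∃ X, IsSimulation ρ ρ' r X ∧ X p q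

def MutCorr {α β : Type} (ρ : ℕ → Lang α) (p : Lang α) (r : α → β → Prop)
    (ρ' : ℕ → Lang β) (q : Lang β) : Prop :=
  Corr ρ p r ρ' q ∧ Corr ρ' q (fun b a => r a b) ρ p

theorem corr_trans {α β γ : Type} (ρ₁ : ℕ → Lang α) (ρ₂ : ℕ → Lang β) (ρ₃ : ℕ → Lang γ)
    (p₁ : Lang α) (p₂ : Lang β) (p₃ : Lang γ)
    (r : α → β → Prop) (s : β → γ → Prop)
    (h₁ : Corr ρ₁ p₁ r ρ₂ p₂) (h₂ : Corr ρ₂ p₂ s ρ₃ p₃) :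
    Corr ρ₁ p₁ (fun a c => ∃ b, r a b ∧ s b c) ρ₃ p₃ := by
  obtain ⟨X, ⟨hX1, hX2, hX3⟩, hXp⟩ := h₁
  obtain ⟨Y, ⟨hY1, hY2, hY3⟩, hYp⟩ := h₂
  refine ⟨fun p q => ∃ m, X p m ∧ Y m q, ⟨?_, ?_, ?_⟩, p₂, hXp, hYp⟩
  · rintro p q σ₁ σ₂ q' σ₂' ⟨m, hxm, hym⟩ ⟨b, hrb, hsb⟩ hstep
    obtain ⟨m', τ', hms, hym', hs'⟩ := hY1 m q b σ₂ q' σ₂' hym hsb hstep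
    obtain ⟨p', σ₁', hps, hxm', hr'⟩ := hX1 p m σ₁ b m' τ' hxm hrb hms
    exact ⟨p', σ₁', hps, ⟨m', hxm', hym'⟩, τ', hr', hs'⟩
  · rintro q ⟨m, hxm, hym⟩
    exact hY2 q ((hX2 m hxm) ▸ hym)
  · rintro p ⟨m, hxm, hym⟩
    exact hX3 p ((hY3 m hym) ▸ hxm)
end

section
/- Associativity of sequential composition up to mutual correspondence: for any ρ : ℕ → 𝓛 α and any p₁, p₂, p₃ : 𝓛 α, the programs (ρ, p₁ ; (p₂ ; p₃)) and (ρ, (p₁ ; p₂) ; p₃) mutually correspond with respect to the identity state relation, i.e. (ρ, p₁ ; (p₂ ; p₃)) ≈ (ρ, (p₁ ; p₂) ; p₃). -/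
lemma pstep_seq_inv {α : Type} {ρ : ℕ → Lang α} {a b x : Lang α} {σ σ' : α}
    (h : PStep ρ (Lang.seq a b, σ) (x, σ')) :
    (∃ a', x = Lang.seq a' b ∧ PStep ρ (a, σ) (a', σ')) ∨
    (a = Lang.skip ∧ x = b ∧ σ' = σ) := by
  cases h with
  | seq h => exact Or.inl ⟨_, rfl, h⟩
  | seqSkip => exact Or.inr ⟨rfl, rfl, rfl⟩

theorem seq_assoc {α : Type} (ρ : ℕ → Lang α) (p₁ p₂ p₃ : Lang α) :
    MutCorr ρ (Lang.seq p₁ (Lang.seq p₂ p₃)) (fun a b => a = b) ρ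
      (Lang.seq (Lang.seq p₁ p₂) p₃) := by
  constructor
  · refine ⟨fun p q => p = q ∨ ∃ a b c, p = Lang.seq a (Lang.seq b c) ∧
      q = Lang.seq (Lang.seq a b) c, ⟨?_, ?_, ?_⟩, Or.inr ⟨p₁, p₂, p₃, rfl, rfl⟩⟩
    · rintro p q σ₁ σ₂ q' σ₂' hX rfl hstep
      rcases hX with rfl | ⟨a, b, c, rfl, rfl⟩
      · exact ⟨q', σ₂', hstep, Or.inl rfl, rfl⟩
      · rcases pstep_seq_inv hstep with ⟨ab', rfl, hab⟩ | ⟨heq, rfl, rfl⟩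
        · rcases pstep_seq_inv hab with ⟨a', rfl, ha⟩ | ⟨rfl, rfl, rfl⟩
          · exact ⟨Lang.seq a' (Lang.seq b c), σ₂', PStep.seq ha,
              Or.inr ⟨a', b, c, rfl, rfl⟩, rfl⟩
          · exact ⟨_, _, PStep.seqSkip, Or.inl rfl, rfl⟩
        · simp at heq
    · rintro q (rfl | ⟨a, b, c, h, rfl⟩)
      · rfl
      · simp at h
    · rintro p (rfl | ⟨a, b, c, rfl, h⟩)
      · rfl
      · simp at h
  · refine ⟨fun q p => q = p ∨ ∃ a b c, q = Lang.seq (Lang.seq a b) c ∧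
      p = Lang.seq a (Lang.seq b c), ⟨?_, ?_, ?_⟩, Or.inr ⟨p₁, p₂, p₃, rfl, rfl⟩⟩
    · rintro q p σ₂ σ₁ p' σ₁' hX rfl hstep
      rcases hX with rfl | ⟨a, b, c, rfl, rfl⟩
      · exact ⟨p', σ₁', hstep, Or.inl rfl, rfl⟩
      · rcases pstep_seq_inv hstep with ⟨a', rfl, ha⟩ | ⟨rfl, rfl, rfl⟩
        · exact ⟨Lang.seq (Lang.seq a' b) c, σ₁', PStep.seq (PStep.seq ha),
            Or.inr ⟨a', b, c, rfl, rfl⟩, rfl⟩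
        · exact ⟨_, _, PStep.seq PStep.seqSkip, Or.inl rfl, rfl⟩
    · rintro q (rfl | ⟨a, b, c, h, rfl⟩)
      · rfl
      · simp at h
    · rintro p (rfl | ⟨a, b, c, rfl, h⟩)
      · rfl
      · simp at h
end

section
/- Commutativity of parallel composition up to mutual correspondence: let m > 0, let π be a permutation of {1,…,m}, and assume qᵢ = p_{π(i)} for all i ∈ {1,…,m}. Then (ρ, Parallel [p₁,…,pₘ]) ≈ (ρ, Parallel [q₁,…,qₘ]) with respect to the identity state relation. -/
lemma ofFn_set {α : Type} {m : ℕ} (f : Fin m → α) (i : Fin m) (v : α) :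
    (List.ofFn f).set i v = List.ofFn (Function.update f i v) := by
  apply List.ext_getElem
  · simp
  · intro n h1 h2
    simp only [List.getElem_set, List.getElem_ofFn, Function.update_apply, Fin.ext_iff]
    split_ifs <;> first | rfl | omega

lemma sim_perm {α : Type} (ρ : ℕ → Lang α) (m : ℕ) (π : Equiv.Perm (Fin m))
    (r : α → α → Prop) (hr : ∀ σ, r σ σ) (hr' : ∀ a b, r a b → a = b) :
    IsSimulation ρ ρ r (fun a b =>
      (∃ ps : Fin m → Lang α, a = Lang.par (List.ofFn ps) ∧
        b = Lang.par (List.ofFn (ps ∘ π))) ∨ (a = Lang.skip ∧ b = Lang.skip)) := by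
  refine ⟨?_, ?_, ?_⟩
  · rintro p q σ₁ σ₂ q' σ₂' (⟨ps, rfl, rfl⟩ | ⟨rfl, rfl⟩) hrel hstep
    · cases hr' _ _ hrel
      cases hstep with
      | par hi h =>
        rename_i i p'
        have him : i < m := by simpa using hi
        rw [List.get_ofFn] at h
        set j : Fin m := π ⟨i, him⟩ with hj
        have hjl : (j : ℕ) < (List.ofFn ps).length := by simpa using j.isLt
        refine ⟨Lang.par ((List.ofFn ps).set j p'), σ₂', ?_, ?_, hr σ₂'⟩
        · exact PStep.par hjl (by rw [List.get_ofFn]; simpa using h)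
        · left
          refine ⟨Function.update ps j p', ?_, ?_⟩
          · rw [ofFn_set]
          · rw [ofFn_set (ps ∘ ⇑π) ⟨i, him⟩ p']
            rw [Function.update_comp_equiv ps π j p']
            simp [hj]
      | parSkip hne h =>
        have hm0 : m ≠ 0 := by
          intro h0
          exact hne (by simp [List.ofFn_eq_nil_iff, h0])
        refine ⟨Lang.skip, _, ?_, Or.inr ⟨rfl, rfl⟩, hr _⟩
        apply PStep.parSkip
        · simp [List.ofFn_eq_nil_iff, hm0]
        · intro x hx
          rw [List.mem_ofFn] at hx
          obtain ⟨k, rfl⟩ := hx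
          exact h _ (by rw [List.mem_ofFn]; exact ⟨π.symm k, by simp⟩)
    · cases hstep
  · rintro q (⟨ps, h1, h2⟩ | ⟨-, rfl⟩) <;> simp_all
  · rintro p (⟨ps, h1, h2⟩ | ⟨rfl, -⟩) <;> simp_all

theorem par_comm {α : Type} (ρ : ℕ → Lang α) (m : ℕ) (hm : 0 < m)
    (p q : Fin m → Lang α) (π : Equiv.Perm (Fin m))
    (h : ∀ i, q i = p (π i)) :
    MutCorr ρ (Lang.par (List.ofFn p)) (fun a b => a = b) ρ
      (Lang.par (List.ofFn q)) := by
  constructor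
  · exact ⟨_, sim_perm ρ m π _ (fun σ => rfl) (fun a b hh => hh),
      Or.inl ⟨p, rfl, by congr 1; rw [List.ofFn_inj]; funext i; exact h i⟩⟩
  · exact ⟨_, sim_perm ρ m π.symm _ (fun σ => rfl) (fun a b hh => hh.symm),
      Or.inl ⟨q, rfl, by congr 1; rw [List.ofFn_inj]; funext i; simp [h]⟩⟩
end

section
/- Closure of correspondence under parallel composition: let m > 0 and assume (ρ,pᵢ) ⊒_r (ρ',qᵢ) for all i ∈ {1,…,m}. Then (ρ, Parallel [p₁,…,pₘ]) ⊒_r (ρ', Parallel [q₁,…,qₘ]). -/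
theorem par_corr {α β : Type} (ρ : ℕ → Lang α) (ρ' : ℕ → Lang β)
    (r : α → β → Prop) (m : ℕ) (hm : 0 < m)
    (p : Fin m → Lang α) (q : Fin m → Lang β)
    (h : ∀ i, Corr ρ (p i) r ρ' (q i)) :
    Corr ρ (Lang.par (List.ofFn p)) r ρ' (Lang.par (List.ofFn q)) := by

  choose X hXsim hXpq using h
  -- union of the component simulations
  set Y : Lang α → Lang β → Prop := fun a b => ∃ i, X i a b with hY
  have hYsim : IsSimulation ρ ρ' r Y := by
    refine ⟨?_, ?_, ?_⟩
    · rintro a b σ₁ σ₂ b' σ₂' ⟨i, hi⟩ hr hst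
      obtain ⟨a', σ₁', h1, h2, h3⟩ := (hXsim i).1 a b σ₁ σ₂ b' σ₂' hi hr hst
      exact ⟨a', σ₁', h1, ⟨i, h2⟩, h3⟩
    · rintro b ⟨i, hi⟩; exact (hXsim i).2.1 b hi
    · rintro a ⟨i, hi⟩; exact (hXsim i).2.2 a hi
  -- lifted relation on parallel compositions
  refine ⟨fun a b => (a = Lang.skip ∧ b = Lang.skip) ∨
    ∃ ps qs, a = Lang.par ps ∧ b = Lang.par qs ∧ ps ≠ [] ∧
      ps.length = qs.length ∧
      ∀ (i : ℕ) (h1 : i < ps.length) (h2 : i < qs.length),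
        Y ps[i] qs[i], ⟨?_, ?_, ?_⟩, ?_⟩
  · rintro a b σ₁ σ₂ b' σ₂' (⟨rfl, rfl⟩ | ⟨ps, qs, rfl, rfl, hne, hlen, hcomp⟩) hr hst
    · cases hst
    · cases hst with
      | par hi hstep =>
        rename_i i q'
        have h1 : i < ps.length := by omega
        obtain ⟨a', σ₁', s1, s2, s3⟩ :=
          hYsim.1 ps[i] qs[i] σ₁ σ₂ q' σ₂'
            (hcomp i h1 hi) hr (by simpa using hstep)
        refine ⟨Lang.par (ps.set i a'), σ₁',
          PStep.par h1 (by simpa using s1), Or.inr ⟨ps.set i a', qs.set i q',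
            rfl, rfl, by simp [hne], by simp [hlen], ?_⟩, s3⟩
        intro j hj1 hj2
        rcases eq_or_ne j i with rfl | hji
        · simpa [List.getElem_set] using s2
        · simp only [List.getElem_set, if_neg (Ne.symm hji)]
          exact hcomp j (by simpa using hj1) (by simpa using hj2)
      | parSkip hne' hall =>
        have hps : ∀ x ∈ ps, x = Lang.skip := by
          intro x hx
          obtain ⟨i, h1, rfl⟩ := List.mem_iff_getElem.mp hx
          have h2 : i < qs.length := by omega
          exact hYsim.2.2 _ (by
            have := hcomp i h1 h2
            rwa [hall qs[i] (List.getElem_mem h2)] at this)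
        exact ⟨Lang.skip, σ₁, PStep.parSkip hne hps, Or.inl ⟨rfl, rfl⟩, hr⟩
  · rintro b (⟨-, rfl⟩ | ⟨ps, qs, hps, -, -⟩)
    · rfl
    · exact absurd hps (by simp)
  · rintro a (⟨rfl, -⟩ | ⟨ps, qs, -, hqs, -⟩)
    · rfl
    · exact absurd hqs (by simp)
  · refine Or.inr ⟨List.ofFn p, List.ofFn q, rfl, rfl, ?_, by simp, ?_⟩
    · simp [List.ofFn_eq_nil_iff]; omega
    · intro i h1 h2
      simp only [List.getElem_ofFn]
      exact ⟨_, hXpq _⟩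
end

section
/- Closure of correspondence under sequential composition: if (ρ,p₁) ⊒_r (ρ',q₁) and (ρ,p₂) ⊒_r (ρ',q₂), then (ρ, p₁ ; p₂) ⊒_r (ρ', q₁ ; q₂). -/
theorem seq_corr {α β : Type} (ρ : ℕ → Lang α) (ρ' : ℕ → Lang β)
    (r : α → β → Prop) (p₁ p₂ : Lang α) (q₁ q₂ : Lang β)
    (h₁ : Corr ρ p₁ r ρ' q₁) (h₂ : Corr ρ p₂ r ρ' q₂) :
    Corr ρ (Lang.seq p₁ p₂) r ρ' (Lang.seq q₁ q₂) := by
  obtain ⟨X₁, ⟨hs₁, hk₁, hk₁'⟩, hX₁⟩ := h₁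
  obtain ⟨X₂, ⟨hs₂, hk₂, hk₂'⟩, hX₂⟩ := h₂
  refine ⟨fun p q => (∃ a b, p = Lang.seq a p₂ ∧ q = Lang.seq b q₂ ∧ X₁ a b) ∨ X₂ p q,
    ⟨?_, ?_, ?_⟩, Or.inl ⟨p₁, q₁, rfl, rfl, hX₁⟩⟩
  · rintro p q σ₁ σ₂ q' σ₂' (⟨a, b, rfl, rfl, hab⟩ | hpq) hr hstep
    · cases hstep with
      | seq h =>
        obtain ⟨p', σ₁', hst, hX, hr'⟩ := hs₁ _ _ _ _ _ _ hab hr h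
        exact ⟨Lang.seq p' p₂, σ₁', PStep.seq hst, Or.inl ⟨p', _, rfl, rfl, hX⟩, hr'⟩
      | seqSkip =>
        have ha := hk₁' _ hab
        subst ha
        exact ⟨p₂, σ₁, PStep.seqSkip, Or.inr hX₂, hr⟩
    · obtain ⟨p', σ₁', hst, hX, hr'⟩ := hs₂ _ _ _ _ _ _ hpq hr hstep
      exact ⟨p', σ₁', hst, Or.inr hX, hr'⟩
  · rintro q (⟨a, b, h, rfl, hab⟩ | hpq)
    · exact absurd h (by simp)
    · exact hk₂ _ hpq
  · rintro p (⟨a, b, rfl, h, hab⟩ | hpq)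
    · exact absurd h (by simp)
    · exact hk₂' _ hpq
end

section
/- Closure of correspondence under while-statements: assume (1) (ρ,p₁) ⊒_r (ρ',p₂), (2) (ρ,q₁) ⊒_r (ρ',q₂), and (3) for any (σ₁,σ₂) ∈ r, σ₁ ∈ C₁ holds if and only if σ₂ ∈ C₂ holds. Then (ρ, while C₁ p₁ q₁) ⊒_r (ρ', while C₂ p₂ q₂). -/
theorem while_corr {α β : Type} (ρ : ℕ → Lang α) (ρ' : ℕ → Lang β)
    (r : α → β → Prop) (C₁ : α → Prop) (C₂ : β → Prop)
    (p₁ q₁ : Lang α) (p₂ q₂ : Lang β)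
    (h₁ : Corr ρ p₁ r ρ' p₂) (h₂ : Corr ρ q₁ r ρ' q₂)
    (h₃ : ∀ σ₁ σ₂, r σ₁ σ₂ → (C₁ σ₁ ↔ C₂ σ₂)) :
    Corr ρ (Lang.while C₁ p₁ q₁) r ρ' (Lang.while C₂ p₂ q₂) := by
  obtain ⟨X₁, ⟨s₁, sk₁, sk₁'⟩, hX₁⟩ := h₁
  obtain ⟨X₂, ⟨s₂, sk₂, sk₂'⟩, hX₂⟩ := h₂
  refine ⟨fun p q => X₂ p q ∨
      (p = Lang.while C₁ p₁ q₁ ∧ q = Lang.while C₂ p₂ q₂) ∨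
      (∃ a b, X₁ a b ∧
        p = Lang.seq a (Lang.seq Lang.skip (Lang.while C₁ p₁ q₁)) ∧
        q = Lang.seq b (Lang.seq Lang.skip (Lang.while C₂ p₂ q₂))) ∨
      (p = Lang.seq Lang.skip (Lang.while C₁ p₁ q₁) ∧
       q = Lang.seq Lang.skip (Lang.while C₂ p₂ q₂)),
    ⟨?_, ?_, ?_⟩, Or.inr (Or.inl ⟨rfl, rfl⟩)⟩
  · rintro p q σ₁ σ₂ q' σ₂' (h | ⟨rfl, rfl⟩ | ⟨a, b, hab, rfl, rfl⟩ | ⟨rfl, rfl⟩) hr hstep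
    · obtain ⟨p', σ₁', h1, h2, h3⟩ := s₂ _ _ _ _ _ _ h hr hstep
      exact ⟨p', σ₁', h1, Or.inl h2, h3⟩
    · cases hstep with
      | whileT h =>
        exact ⟨_, σ₁, PStep.whileT ((h₃ _ _ hr).2 h),
          Or.inr (Or.inr (Or.inl ⟨p₁, p₂, hX₁, rfl, rfl⟩)), hr⟩
      | whileF h =>
        exact ⟨_, σ₁, PStep.whileF (fun hc => h ((h₃ _ _ hr).1 hc)), Or.inl hX₂, hr⟩
    · cases hstep with
      | seq h =>
        obtain ⟨a', σ₁', h1, h2, h3⟩ := s₁ _ _ _ _ _ _ hab hr h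
        exact ⟨_, σ₁', PStep.seq h1,
          Or.inr (Or.inr (Or.inl ⟨a', _, h2, rfl, rfl⟩)), h3⟩
      | seqSkip =>
        have ha := sk₁' a hab
        subst ha
        exact ⟨_, σ₁, PStep.seqSkip, Or.inr (Or.inr (Or.inr ⟨rfl, rfl⟩)), hr⟩
    · cases hstep with
      | seq h => cases h
      | seqSkip =>
        exact ⟨_, σ₁, PStep.seqSkip, Or.inr (Or.inl ⟨rfl, rfl⟩), hr⟩
  · rintro q (h | ⟨h, rfl⟩ | ⟨a, b, hab, h, rfl⟩ | ⟨h, rfl⟩)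
    · exact sk₂ _ h
    all_goals cases h
  · rintro p (h | ⟨rfl, h⟩ | ⟨a, b, hab, rfl, h⟩ | ⟨rfl, h⟩)
    · exact sk₂' _ h
    all_goals cases h
end

section
/- Closure of correspondence under await-statements: assume (1) (ρ,p₁) ⊒_r (ρ',p₂), and (2) for any (σ₁,σ₂) ∈ r, σ₂ ∈ C₂ implies σ₁ ∈ C₁. Then (ρ, await C₁ p₁) ⊒_r (ρ', await C₂ p₂). -/
lemma sim_run {α β : Type} {ρ : ℕ → Lang α} {ρ' : ℕ → Lang β}
    {r : α → β → Prop} {X : Lang α → Lang β → Prop}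
    (hX : IsSimulation ρ ρ' r X) (n : ℕ) (f : ℕ → Lang β × β)
    (hstep : ∀ i, i < n → PStep ρ' (f i) (f (i + 1)))
    (p : Lang α) (σ₁ : α) (h0 : X p (f 0).1) (hr : r σ₁ (f 0).2) :
    ∃ g : ℕ → Lang α × α, g 0 = (p, σ₁) ∧
      (∀ i, i < n → PStep ρ (g i) (g (i + 1))) ∧
      X (g n).1 (f n).1 ∧ r (g n).2 (f n).2 := by
  induction n with
  | zero => exact ⟨fun _ => (p, σ₁), rfl, fun i h => absurd h (Nat.not_lt_zero i), h0, hr⟩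
  | succ n ih =>
    obtain ⟨g, hg0, hgs, hgX, hgr⟩ := ih (fun i hi => hstep i (Nat.lt_succ_of_lt hi))
    have hs : PStep ρ' ((f n).1, (f n).2) ((f (n+1)).1, (f (n+1)).2) := by
      simpa using hstep n (Nat.lt_succ_self n)
    obtain ⟨p', σ₁', hst, hX', hr'⟩ :=
      hX.1 (g n).1 (f n).1 (g n).2 (f n).2 (f (n+1)).1 (f (n+1)).2 hgX hgr hs
    refine ⟨fun i => if i < n + 1 then g i else (p', σ₁'), by simp [hg0], ?_, ?_, ?_⟩
    · intro i hi
      rcases Nat.lt_or_ge i n with h | h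
      · simpa [Nat.lt_succ_of_lt h, Nat.succ_lt_succ h] using hgs i h
      · have : i = n := Nat.le_antisymm (Nat.lt_succ_iff.mp hi) h
        subst this
        simpa [Nat.lt_succ_self i] using hst
    · simpa using hX'
    · simpa using hr'

theorem await_corr {α β : Type} (ρ : ℕ → Lang α) (ρ' : ℕ → Lang β)
    (r : α → β → Prop) (C₁ : α → Prop) (C₂ : β → Prop)
    (p₁ : Lang α) (p₂ : Lang β)
    (h₁ : Corr ρ p₁ r ρ' p₂)
    (h₂ : ∀ σ₁ σ₂, r σ₁ σ₂ → C₂ σ₂ → C₁ σ₁) :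
    Corr ρ (Lang.await C₁ p₁) r ρ' (Lang.await C₂ p₂) := by
  obtain ⟨X, hX, hpq⟩ := h₁
  refine ⟨fun p q => (p = Lang.await C₁ p₁ ∧ q = Lang.await C₂ p₂) ∨
    (p = Lang.skip ∧ q = Lang.skip), ⟨?_, ?_, ?_⟩, Or.inl ⟨rfl, rfl⟩⟩
  · rintro p q σ₁ σ₂ q' σ₂' (⟨rfl, rfl⟩ | ⟨rfl, rfl⟩) hr hstep
    · cases hstep with
      | await hC n f h0 hn hsteps =>
        obtain ⟨g, hg0, hgs, hgX, hgr⟩ := sim_run hX n f hsteps p₁ σ₁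
          (by rw [h0]; exact hpq) (by rw [h0]; exact hr)
        have hskip : (g n).1 = Lang.skip := hX.2.2 _ (by rw [hn] at hgX; exact hgX)
        refine ⟨Lang.skip, (g n).2, ?_, Or.inr ⟨rfl, rfl⟩, by rw [hn] at hgr; exact hgr⟩
        exact PStep.await (h₂ σ₁ σ₂ hr hC) n g hg0
          (by rw [← hskip]) hgs
    · cases hstep
  · rintro q (⟨h, _⟩ | ⟨_, rfl⟩)
    · cases h
    · rfl
  · rintro p (⟨_, h⟩ | ⟨rfl, _⟩)
    · cases h
    · rfl
end

section
/- Sequential normalisation of conditionals: for any ρ, state predicate C and programs p₁, p₂, q, the programs (ρ, (ite C p₁ p₂) ; q) and (ρ, ite C (p₁ ; q) (p₂ ; q)) mutually correspond with respect to the identity state relation. -/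
theorem ite_seq_norm {α : Type} (ρ : ℕ → Lang α) (C : α → Prop)
    (p₁ p₂ q : Lang α) :
    MutCorr ρ (Lang.seq (Lang.ite C p₁ p₂) q) (fun a b => a = b) ρ
      (Lang.ite C (Lang.seq p₁ q) (Lang.seq p₂ q)) := by
  constructor
  · refine ⟨fun a b => (a = Lang.seq (Lang.ite C p₁ p₂) q ∧
      b = Lang.ite C (Lang.seq p₁ q) (Lang.seq p₂ q)) ∨ a = b, ⟨?_, ?_, ?_⟩, Or.inl ⟨rfl, rfl⟩⟩
    · rintro p q' σ₁ σ₂ q'' σ₂' (⟨rfl, rfl⟩ | rfl) rfl hstep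
      · cases hstep with
        | iteT h => exact ⟨_, _, PStep.seq (PStep.iteT h), Or.inr rfl, rfl⟩
        | iteF h => exact ⟨_, _, PStep.seq (PStep.iteF h), Or.inr rfl, rfl⟩
      · exact ⟨q'', σ₂', hstep, Or.inr rfl, rfl⟩
    · rintro q' (⟨h, rfl⟩ | rfl) <;> simp_all
    · rintro p' (⟨rfl, h⟩ | rfl) <;> simp_all
  · refine ⟨fun a b => (a = Lang.ite C (Lang.seq p₁ q) (Lang.seq p₂ q) ∧
      b = Lang.seq (Lang.ite C p₁ p₂) q) ∨ a = b, ⟨?_, ?_, ?_⟩, Or.inl ⟨rfl, rfl⟩⟩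
    · rintro p q' σ₁ σ₂ q'' σ₂' (⟨rfl, rfl⟩ | rfl) rfl hstep
      · cases hstep with
        | seq h =>
          cases h with
          | iteT h => exact ⟨_, _, PStep.iteT h, Or.inr rfl, rfl⟩
          | iteF h => exact ⟨_, _, PStep.iteF h, Or.inr rfl, rfl⟩
      · exact ⟨q'', σ₂', hstep, Or.inr rfl, rfl⟩
    · rintro q' (⟨h, rfl⟩ | rfl) <;> simp_all
    · rintro p' (⟨rfl, h⟩ | rfl) <;> simp_all
end

section
/- Sequential normalisation of while-statements: for any ρ, state predicate C and programs p₁, p₂, q, the programs (ρ, (while C p₁ p₂) ; q) and (ρ, while C p₁ (p₂ ; q)) mutually correspond with respect to the identity state relation. -/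
inductive SimX {α : Type} (C : α → Prop) (p₁ p₂ q : Lang α) : Lang α → Lang α → Prop
  | diag (a : Lang α) : SimX C p₁ p₂ q a a
  | base : SimX C p₁ p₂ q (.seq (.while C p₁ p₂) q) (.while C p₁ (.seq p₂ q))
  | mid1 (s : Lang α) :
      SimX C p₁ p₂ q (.seq (.seq s (.seq .skip (.while C p₁ p₂))) q)
        (.seq s (.seq .skip (.while C p₁ (.seq p₂ q))))
  | mid2 : SimX C p₁ p₂ q (.seq (.seq .skip (.while C p₁ p₂)) q)
      (.seq .skip (.while C p₁ (.seq p₂ q)))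

lemma simX_right {α : Type} {ρ : ℕ → Lang α} {C : α → Prop} {p₁ p₂ q a b b' : Lang α}
    {σ σ' : α} (hx : SimX C p₁ p₂ q a b) (hs : PStep ρ (b, σ) (b', σ')) :
    ∃ a', PStep ρ (a, σ) (a', σ') ∧ SimX C p₁ p₂ q a' b' := by
  cases hx with
  | diag => exact ⟨b', hs, .diag _⟩
  | base =>
    cases hs with
    | whileT h => exact ⟨_, .seq (.whileT h), .mid1 p₁⟩
    | whileF h => exact ⟨_, .seq (.whileF h), .diag _⟩
  | mid1 s =>
    cases hs with
    | seq h => exact ⟨_, .seq (.seq h), .mid1 _⟩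
    | seqSkip => exact ⟨_, .seq .seqSkip, .mid2⟩
  | mid2 =>
    cases hs with
    | seq h => cases h
    | seqSkip => exact ⟨_, .seq .seqSkip, .base⟩

lemma simX_left {α : Type} {ρ : ℕ → Lang α} {C : α → Prop} {p₁ p₂ q a b a' : Lang α}
    {σ σ' : α} (hx : SimX C p₁ p₂ q a b) (hs : PStep ρ (a, σ) (a', σ')) :
    ∃ b', PStep ρ (b, σ) (b', σ') ∧ SimX C p₁ p₂ q a' b' := by
  cases hx with
  | diag => exact ⟨a', hs, .diag _⟩
  | base =>
    cases hs with
    | seq h =>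
      cases h with
      | whileT h => exact ⟨_, .whileT h, .mid1 p₁⟩
      | whileF h => exact ⟨_, .whileF h, .diag _⟩
  | mid1 s =>
    cases hs with
    | seq h =>
      cases h with
      | seq h => exact ⟨_, .seq h, .mid1 _⟩
      | seqSkip => exact ⟨_, .seqSkip, .mid2⟩
  | mid2 =>
    cases hs with
    | seq h =>
      cases h with
      | seq h => cases h
      | seqSkip => exact ⟨_, .seqSkip, .base⟩

lemma simX_skip_left {α : Type} {C : α → Prop} {p₁ p₂ q b : Lang α}
    (h : SimX C p₁ p₂ q .skip b) : b = .skip := by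
  cases h; rfl

lemma simX_skip_right {α : Type} {C : α → Prop} {p₁ p₂ q a : Lang α}
    (h : SimX C p₁ p₂ q a .skip) : a = .skip := by
  cases h; rfl

theorem while_seq_norm {α : Type} (ρ : ℕ → Lang α) (C : α → Prop)
    (p₁ p₂ q : Lang α) :
    MutCorr ρ (Lang.seq (Lang.while C p₁ p₂) q) (fun a b => a = b) ρ
      (Lang.while C p₁ (Lang.seq p₂ q)) := by
  constructor
  · refine ⟨SimX C p₁ p₂ q, ⟨?_, ?_, ?_⟩, .base⟩
    · rintro p q' σ₁ σ₂ q'' σ₂' hx rfl hstep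
      obtain ⟨a', ha, hx'⟩ := simX_right hx hstep
      exact ⟨a', σ₂', ha, hx', rfl⟩
    · exact fun _ h => simX_skip_left h
    · exact fun _ h => simX_skip_right h
  · refine ⟨fun b a => SimX C p₁ p₂ q a b, ⟨?_, ?_, ?_⟩, .base⟩
    · rintro p q' σ₁ σ₂ q'' σ₂' hx rfl hstep
      obtain ⟨b', hb, hx'⟩ := simX_left hx hstep
      exact ⟨b', σ₂', hb, hx', rfl⟩
    · exact fun _ h => simX_skip_right h
    · exact fun _ h => simX_skip_left h
end

section
/- Replacing conditionals by conditional jumps: for any ρ, state predicate C, program p and label j, the programs (ρ, ite C p (ρ j)) and (ρ, cjump (¬C) j p) mutually correspond with respect to the identity state relation, where ¬C denotes the complement of the state predicate C. -/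
theorem ite_cjump_norm {α : Type} (ρ : ℕ → Lang α) (C : α → Prop)
    (p : Lang α) (j : ℕ) :
    MutCorr ρ (Lang.ite C p (ρ j)) (fun a b => a = b) ρ
      (Lang.cjump (fun σ => ¬ C σ) j p) := by
  constructor
  · refine ⟨fun a b => (a = Lang.ite C p (ρ j) ∧ b = Lang.cjump (fun σ => ¬ C σ) j p) ∨ a = b,
      ⟨?_, ?_, ?_⟩, Or.inl ⟨rfl, rfl⟩⟩
    · rintro a b σ₁ σ₂ q' σ₂' (⟨rfl, rfl⟩ | rfl) rfl hstep
      · cases hstep with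
        | cjumpT h => exact ⟨ρ j, σ₁, PStep.iteF h, Or.inr rfl, rfl⟩
        | cjumpF h => exact ⟨p, σ₁, PStep.iteT (Classical.not_not.mp h), Or.inr rfl, rfl⟩
      · exact ⟨q', σ₂', hstep, Or.inr rfl, rfl⟩
    · rintro q (⟨h, rfl⟩ | rfl) <;> simp_all
    · rintro q (⟨rfl, h⟩ | rfl) <;> simp_all
  · refine ⟨fun a b => (a = Lang.cjump (fun σ => ¬ C σ) j p ∧ b = Lang.ite C p (ρ j)) ∨ a = b,
      ⟨?_, ?_, ?_⟩, Or.inl ⟨rfl, rfl⟩⟩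
    · rintro a b σ₁ σ₂ q' σ₂' (⟨rfl, rfl⟩ | rfl) rfl hstep
      · cases hstep with
        | iteT h => exact ⟨p, σ₂, PStep.cjumpF (fun hn => hn h), Or.inr rfl, rfl⟩
        | iteF h => exact ⟨ρ j, σ₂, PStep.cjumpT h, Or.inr rfl, rfl⟩
      · exact ⟨q', σ₂', hstep, Or.inr rfl, rfl⟩
    · rintro q (⟨h, rfl⟩ | rfl) <;> simp_all
    · rintro q (⟨rfl, h⟩ | rfl) <;> simp_all
end

section
/- Replacing while-statements by jumps: assume (1) ρ i = cjump (¬C) j (p ; jump i) and (2) ρ j = q, where jump i := cjump ⊤ i skip (with ⊤ the universal state predicate) and ¬C denotes the complement of the state predicate C, and where i and j are labels. Then (ρ, while C p q) ≈ (ρ, cjump (¬C) j (p ; jump i)) with respect to the identity state relation. -/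
/-- The unconditional jump: cjump with the universal state predicate and skip. -/
def Lang.jump {α : Type} (i : ℕ) : Lang α :=
  Lang.cjump (fun _ => True) i Lang.skip


inductive XR {α : Type} (C : α → Prop) (p q : Lang α) (i j : ℕ) :
    Lang α → Lang α → Prop
  | id (r : Lang α) : XR C p q i j r r
  | whileJ : XR C p q i j (Lang.while C p q)
      (Lang.cjump (fun σ => ¬ C σ) j (Lang.seq p (Lang.jump i)))
  | seqX (p' : Lang α) : XR C p q i j
      (Lang.seq p' (Lang.seq Lang.skip (Lang.while C p q)))
      (Lang.seq p' (Lang.jump i))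
  | skipW : XR C p q i j (Lang.seq Lang.skip (Lang.while C p q)) (Lang.jump i)

theorem while_cjump_norm {α : Type} (ρ : ℕ → Lang α) (C : α → Prop)
    (p q : Lang α) (i j : ℕ)
    (h₁ : ρ i = Lang.cjump (fun σ => ¬ C σ) j (Lang.seq p (Lang.jump i)))
    (h₂ : ρ j = q) :
    MutCorr ρ (Lang.while C p q) (fun a b => a = b) ρ
      (Lang.cjump (fun σ => ¬ C σ) j (Lang.seq p (Lang.jump i))) := by
  constructor
  · refine ⟨XR C p q i j, ⟨?_, ?_, ?_⟩, XR.whileJ⟩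
    · intro a b σ₁ σ₂ b' σ₂' hX hr hstep
      subst hr
      cases hX with
      | id r => exact ⟨b', σ₂', hstep, XR.id b', rfl⟩
      | whileJ =>
        cases hstep with
        | cjumpT h =>
          refine ⟨q, σ₁, PStep.whileF h, ?_, rfl⟩
          rw [h₂]; exact XR.id q
        | cjumpF h => exact ⟨_, _, PStep.whileT (not_not.mp h), XR.seqX p, rfl⟩
      | seqX p' =>
        cases hstep with
        | seq h => exact ⟨_, _, PStep.seq h, XR.seqX _, rfl⟩
        | seqSkip => exact ⟨_, _, PStep.seqSkip, XR.skipW, rfl⟩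
      | skipW =>
        cases hstep with
        | cjumpT h =>
          refine ⟨_, _, PStep.seqSkip, ?_, rfl⟩
          rw [h₁]; exact XR.whileJ
        | cjumpF h => exact absurd trivial h
    · intro b hX; cases hX; rfl
    · intro a hX; cases hX; rfl
  · refine ⟨fun a b => XR C p q i j b a, ⟨?_, ?_, ?_⟩, XR.whileJ⟩
    · intro a b σ₁ σ₂ b' σ₂' hX hr hstep
      subst hr
      cases hX with
      | id r => exact ⟨b', σ₂', hstep, XR.id b', rfl⟩
      | whileJ =>
        cases hstep with
        | whileT h => exact ⟨_, _, PStep.cjumpF (not_not_intro h), XR.seqX p, rfl⟩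
        | whileF h =>
          refine ⟨_, _, PStep.cjumpT h, ?_, rfl⟩
          rw [h₂]; exact XR.id q
      | seqX p' =>
        cases hstep with
        | seq h => exact ⟨_, _, PStep.seq h, XR.seqX _, rfl⟩
        | seqSkip => exact ⟨_, _, PStep.seqSkip, XR.skipW, rfl⟩
      | skipW =>
        cases hstep with
        | seq h => cases h
        | seqSkip =>
          refine ⟨_, _, PStep.cjumpT trivial, ?_, rfl⟩
          rw [h₁]; exact XR.whileJ
    · intro b hX; cases hX; rfl
    · intro a hX; cases hX; rfl
end

section
/- Replay of finite potential computations along correspondences: assume (ρ,p) ⊒_r (ρ',q), sq^q is a finite potential computation of (ρ',q) satisfying the environment condition E(R'), and r ∘ R' ⊆ R ∘ r (relational composition). Further let σ be a state with (σ, state(sq^q₀)) ∈ r. Then there exists a finite potential computation sq^p of (ρ,p) of the same length as sq^q such that: (1) state(sq^p₀) = σ; (2) sq^p satisfies E(R); (3) (state(sq^pᵢ), state(sq^qᵢ)) ∈ r for all i < |sq^q|; (4) (ρ, prog(sq^pᵢ)) ⊒_r (ρ', prog(sq^qᵢ)) for all i < |sq^q|; and (5) for all i < |sq^q| − 1, the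 step from sq^pᵢ to sq^pᵢ₊₁ is an environment step iff the step from sq^qᵢ to sq^qᵢ₊₁ is an environment step. -/
/-- A finite potential computation of (ρ, p): a nonempty sequence of `n`
configurations `c 0, …, c (n-1)`, where the step from `c i` to `c (i+1)` is
an environment step when `e i = true` (program part unchanged) and a program
step otherwise. -/
def IsComp {α : Type} (ρ : ℕ → Lang α) (p : Lang α)
    (n : ℕ) (c : ℕ → Lang α × α) (e : ℕ → Bool) : Prop :=
  0 < n ∧ (c 0).1 = p ∧
  ∀ i, i + 1 < n →
    (e i = true → (c (i + 1)).1 = (c i).1) ∧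
    (e i = false → PStep ρ (c i) (c (i + 1)))

/-- Environment condition E(R). -/
def EnvC {α : Type} (R : α → α → Prop) (n : ℕ)
    (c : ℕ → Lang α × α) (e : ℕ → Bool) : Prop :=
  ∀ i, i + 1 < n → e i = true → R (c i).2 (c (i + 1)).2

/-- Program condition Pr(G). -/
def ProgC {α : Type} (G : α → α → Prop) (n : ℕ)
    (c : ℕ → Lang α × α) (e : ℕ → Bool) : Prop :=
  ∀ i, i + 1 < n → e i = false → G (c i).2 (c (i + 1)).2

/-- Output condition Out(Q): the state of the first skip-configuration
(if any) satisfies Q. -/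
def OutC {α : Type} (Q : α → Prop) (n : ℕ) (c : ℕ → Lang α × α) : Prop :=
  ∀ i, i < n → (c i).1 = Lang.skip → (∀ j, j < i → (c j).1 ≠ Lang.skip) →
    Q (c i).2

/-- Extended Hoare triple over finite potential computations:
ρ ⊨ {R,P} p {Q,G}. -/
def HoareValid {α : Type} (ρ : ℕ → Lang α) (R : α → α → Prop) (P : α → Prop)
    (p : Lang α) (Q : α → Prop) (G : α → α → Prop) : Prop :=
  ∀ n c e, IsComp ρ p n c e → EnvC R n c e → P (c 0).2 →
    OutC Q n c ∧ ProgC G n c e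

theorem corr_replay {α β : Type} (ρ : ℕ → Lang α) (ρ' : ℕ → Lang β)
    (r : α → β → Prop) (R : α → α → Prop) (R' : β → β → Prop)
    (p : Lang α) (q : Lang β)
    (n : ℕ) (c : ℕ → Lang β × β) (e : ℕ → Bool)
    (hcorr : Corr ρ p r ρ' q)
    (hq : IsComp ρ' q n c e) (henv : EnvC R' n c e)
    (hcomp : ∀ a b b', r a b → R' b b' → ∃ a', R a a' ∧ r a' b')
    (σ : α) (hσ : r σ (c 0).2) :
    ∃ (c' : ℕ → Lang α × α) (e' : ℕ → Bool),
      IsComp ρ p n c' e' ∧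
      (c' 0).2 = σ ∧
      EnvC R n c' e' ∧
      (∀ i, i < n → r (c' i).2 (c i).2) ∧
      (∀ i, i < n → Corr ρ (c' i).1 r ρ' (c i).1) ∧
      (∀ i, i + 1 < n → e' i = e i) := by
  classical
  obtain ⟨X, hX, hXpq⟩ := hcorr
  obtain ⟨hsim1, hsim2, hsim3⟩ := hX
  obtain ⟨hn, hc0, hstep⟩ := hq
  have pick : ∀ i, i + 1 < n → e i = false → ∀ pc : Lang α × α,
      X pc.1 (c i).1 → r pc.2 (c i).2 →
      {pc' : Lang α × α // PStep ρ pc pc' ∧ X pc'.1 (c (i+1)).1 ∧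
        r pc'.2 (c (i+1)).2} := by
    intro i h hf pc h1 h2
    have E := hsim1 pc.1 (c i).1 pc.2 (c i).2 (c (i+1)).1 (c (i+1)).2 h1 h2
      ((hstep i h).2 hf)
    exact ⟨(E.choose, E.choose_spec.choose), E.choose_spec.choose_spec⟩
  have pickE : ∀ i, i + 1 < n → e i = true → ∀ pc : Lang α × α,
      r pc.2 (c i).2 → {a' : α // R pc.2 a' ∧ r a' (c (i+1)).2} := by
    intro i h ht pc h2
    have E := hcomp pc.2 (c i).2 (c (i+1)).2 h2 (henv i h ht)
    exact ⟨E.choose, E.choose_spec⟩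
  let D : ℕ → Type := fun i =>
    {pc : Lang α × α // i < n → X pc.1 (c i).1 ∧ r pc.2 (c i).2}
  let stepFn : ∀ i, D i → D (i+1) := fun i prev =>
    if h : i + 1 < n then
      if he : e i = true then
        ⟨(prev.1.1, (pickE i h he prev.1 (prev.2 (Nat.lt_of_succ_lt h)).2).1),
         fun _ => ⟨by
            rw [(hstep i h).1 he]
            exact (prev.2 (Nat.lt_of_succ_lt h)).1,
          (pickE i h he prev.1 (prev.2 (Nat.lt_of_succ_lt h)).2).2.2⟩⟩
      else
        ⟨(pick i h (Bool.eq_false_iff.mpr he) prev.1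
            (prev.2 (Nat.lt_of_succ_lt h)).1 (prev.2 (Nat.lt_of_succ_lt h)).2).1,
         fun _ => ⟨(pick i h (Bool.eq_false_iff.mpr he) prev.1
            (prev.2 (Nat.lt_of_succ_lt h)).1 (prev.2 (Nat.lt_of_succ_lt h)).2).2.2.1,
           (pick i h (Bool.eq_false_iff.mpr he) prev.1
            (prev.2 (Nat.lt_of_succ_lt h)).1 (prev.2 (Nat.lt_of_succ_lt h)).2).2.2.2⟩⟩
    else ⟨prev.1, fun hlt => absurd hlt h⟩
  let f : ∀ i, D i :=
    fun i => Nat.rec ⟨(p, σ), fun _ => ⟨by rw [hc0]; exact hXpq, hσ⟩⟩ stepFn i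
  have main : ∀ i, i + 1 < n →
      ((e i = true → (f (i+1)).1.1 = (f i).1.1 ∧ R (f i).1.2 (f (i+1)).1.2) ∧
       (e i = false → PStep ρ (f i).1 (f (i+1)).1)) := by
    intro i h
    have hf1 : f (i+1) = stepFn i (f i) := rfl
    rw [hf1]
    simp only [stepFn]
    rw [dif_pos h]
    by_cases he : e i = true
    · rw [dif_pos he]
      exact ⟨fun _ => ⟨rfl,
        (pickE i h he (f i).1 ((f i).2 (Nat.lt_of_succ_lt h)).2).2.1⟩,
        fun hf => by simp [he] at hf⟩
    · rw [dif_neg he]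
      refine ⟨fun ht => absurd ht he, fun _ => ?_⟩
      exact (pick i h (Bool.eq_false_iff.mpr he) (f i).1
        ((f i).2 (Nat.lt_of_succ_lt h)).1 ((f i).2 (Nat.lt_of_succ_lt h)).2).2.1
  refine ⟨fun i => (f i).1, e,
    ⟨hn, rfl, fun i h => ⟨fun ht => ((main i h).1 ht).1,
      fun hf => (main i h).2 hf⟩⟩,
    rfl,
    fun i h ht => ((main i h).1 ht).2,
    fun i hi => ((f i).2 hi).2,
    fun i hi => ⟨X, ⟨hsim1, hsim2, hsim3⟩, ((f i).2 hi).1⟩,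
    fun i _ => rfl⟩
end

section
/- Finite computations suffice for extended Hoare triples: for any code retrieving function ρ, program p, state relations R and G and state predicates P and Q, the triple ρ ⊨ᵢ {R,P} p {Q,G} (validity over both finite and infinite potential computations) holds if and only if ρ ⊨ {R,P} p {Q,G} (validity over finite potential computations) holds. -/
/-- An infinite potential computation of (ρ, p). -/
def IsCompI {α : Type} (ρ : ℕ → Lang α) (p : Lang α)
    (c : ℕ → Lang α × α) (e : ℕ → Bool) : Prop :=
  (c 0).1 = p ∧
  ∀ i, (e i = true → (c (i + 1)).1 = (c i).1) ∧
       (e i = false → PStep ρ (c i) (c (i + 1)))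

def EnvCI {α : Type} (R : α → α → Prop)
    (c : ℕ → Lang α × α) (e : ℕ → Bool) : Prop :=
  ∀ i, e i = true → R (c i).2 (c (i + 1)).2

def ProgCI {α : Type} (G : α → α → Prop)
    (c : ℕ → Lang α × α) (e : ℕ → Bool) : Prop :=
  ∀ i, e i = false → G (c i).2 (c (i + 1)).2

def OutCI {α : Type} (Q : α → Prop) (c : ℕ → Lang α × α) : Prop :=
  ∀ i, (c i).1 = Lang.skip → (∀ j, j < i → (c j).1 ≠ Lang.skip) → Q (c i).2

/-- Extended Hoare triple over both finite and infinite potential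
computations: ρ ⊨ᵢ {R,P} p {Q,G}. -/
def HoareValidI {α : Type} (ρ : ℕ → Lang α) (R : α → α → Prop) (P : α → Prop)
    (p : Lang α) (Q : α → Prop) (G : α → α → Prop) : Prop :=
  HoareValid ρ R P p Q G ∧
  ∀ c e, IsCompI ρ p c e → EnvCI R c e → P (c 0).2 →
    OutCI Q c ∧ ProgCI G c e

theorem hoareValidI_iff_hoareValid {α : Type} (ρ : ℕ → Lang α)
    (R G : α → α → Prop) (P Q : α → Prop) (p : Lang α) :
    HoareValidI ρ R P p Q G ↔ HoareValid ρ R P p Q G := by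
  constructor
  · exact fun h => h.1
  · intro h
    refine ⟨h, fun c e hI hE hP => ⟨?_, ?_⟩⟩
    · intro i hski hmin
      have hc : IsComp ρ p (i + 1) c e :=
        ⟨Nat.succ_pos _, hI.1, fun j _ => hI.2 j⟩
      have := (h (i + 1) c e hc (fun j _ hj => hE j hj) hP).1
      exact this i (Nat.lt_succ_self _) hski hmin
    · intro i hei
      have hc : IsComp ρ p (i + 2) c e :=
        ⟨Nat.succ_pos _, hI.1, fun j _ => hI.2 j⟩
      have := (h (i + 2) c e hc (fun j _ hj => hE j hj) hP).2
      exact this i (by omega) hei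
end

section
/- Program correspondence rule for extended Hoare triples: assume (ρ,p) ⊒_r (ρ',q), ρ ⊨ {R,P} p {Q,G}, and (1) r ∘ R' ⊆ R ∘ r (relational composition), (2) P' ⊆ r '' P (image of P under r), (3) r '' Q ⊆ Q', (4) r⁻¹ ∘ G ∘ r ⊆ G'. Then ρ' ⊨ {R',P'} q {Q',G'}. -/
theorem corr_hoare_rule {α β : Type} (ρ : ℕ → Lang α) (ρ' : ℕ → Lang β)
    (r : α → β → Prop) (p : Lang α) (q : Lang β)
    (R G : α → α → Prop) (R' G' : β → β → Prop)
    (P Q : α → Prop) (P' Q' : β → Prop)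
    (hcorr : Corr ρ p r ρ' q)
    (hH : HoareValid ρ R P p Q G)
    (h1 : ∀ a b b', r a b → R' b b' → ∃ a', R a a' ∧ r a' b')
    (h2 : ∀ b, P' b → ∃ a, P a ∧ r a b)
    (h3 : ∀ a b, Q a → r a b → Q' b)
    (h4 : ∀ a a' b b', r a b → G a a' → r a' b' → G' b b') :
    HoareValid ρ' R' P' q Q' G' := by
  obtain ⟨X, hsim, hXpq⟩ := hcorr
  intro n c e hcomp henv hP'
  obtain ⟨hn, hc0, hstep⟩ := hcomp
  obtain ⟨a0, hPa0, hra0⟩ := h2 _ hP'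
  have main : ∀ m, ∃ d : ℕ → Lang α × α, d 0 = (p, a0) ∧
      (∀ i, i ≤ m → i < n → X (d i).1 (c i).1 ∧ r (d i).2 (c i).2) ∧
      (∀ i, i + 1 ≤ m → i + 1 < n →
        (e i = true → (d (i+1)).1 = (d i).1 ∧ R (d i).2 (d (i+1)).2) ∧
        (e i = false → PStep ρ (d i) (d (i+1)))) := by
    intro m
    induction m with
    | zero =>
      refine ⟨fun _ => (p, a0), rfl, ?_, ?_⟩
      · intro i hi _
        interval_cases i
        exact ⟨hc0 ▸ hXpq, hra0⟩
      · intro i hi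
        omega
    | succ m ih =>
      obtain ⟨d, hd0, hinv, hsteps⟩ := ih
      by_cases hlt : m + 1 < n
      · have hinvm := hinv m le_rfl (by omega)
        have hst := hstep m hlt
        cases he : e m with
        | true =>
          obtain ⟨a', hRa', hra'⟩ := h1 _ _ _ hinvm.2 (henv m hlt he)
          refine ⟨fun j => if j = m + 1 then ((d m).1, a') else d j, by simp [hd0], ?_, ?_⟩
          · intro i hi hin
            by_cases hieq : i = m + 1
            · subst hieq
              simp only [if_pos rfl]
              refine ⟨?_, hra'⟩
              have := hst.1 he
              rw [this]
              exact hinvm.1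
            · simpa [hieq] using hinv i (by omega) hin
          · intro i hi hin
            by_cases hieq : i + 1 = m + 1
            · have him : i = m := by omega
              subst him
              have hne : i ≠ i + 1 := by omega
              refine ⟨fun _ => ⟨by simp [hne], by simpa [hne] using hRa'⟩,
                fun hf => by rw [hf] at he; exact absurd he (by simp)⟩
            · have h1' : ¬ (i + 1 = m + 1) := hieq
              have h2' : ¬ (i = m + 1) := by omega
              simpa [h1', h2', show i ≠ m by omega] using hsteps i (by omega) hin
        | false =>
          obtain ⟨p', σ', hpstep, hX', hr'⟩ :=
            hsim.1 (d m).1 (c m).1 (d m).2 (c m).2 (c (m+1)).1 (c (m+1)).2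
              hinvm.1 hinvm.2 (hst.2 he)
          refine ⟨fun j => if j = m + 1 then (p', σ') else d j, by simp [hd0], ?_, ?_⟩
          · intro i hi hin
            by_cases hieq : i = m + 1
            · subst hieq
              simp only [if_pos rfl]
              exact ⟨hX', hr'⟩
            · simpa [hieq] using hinv i (by omega) hin
          · intro i hi hin
            by_cases hieq : i + 1 = m + 1
            · have him : i = m := by omega
              subst him
              have hne : i ≠ i + 1 := by omega
              exact ⟨fun ht => by rw [ht] at he; exact absurd he (by simp),
                fun _ => by simpa [hne] using hpstep⟩
            · have h1' : ¬ (i + 1 = m + 1) := hieq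
              have h2' : ¬ (i = m + 1) := by omega
              simpa [h1', h2', show i ≠ m by omega] using hsteps i (by omega) hin
      · exact ⟨d, hd0, fun i hi hin => hinv i (by omega) hin,
          fun i hi hin => hsteps i (by omega) hin⟩
  obtain ⟨d, hd0, hinvn, hstepsn⟩ := main (n - 1)
  have hinv' : ∀ i, i < n → X (d i).1 (c i).1 ∧ r (d i).2 (c i).2 :=
    fun i hi => hinvn i (by omega) hi
  have hsteps' : ∀ i, i + 1 < n →
      (e i = true → (d (i+1)).1 = (d i).1 ∧ R (d i).2 (d (i+1)).2) ∧
      (e i = false → PStep ρ (d i) (d (i+1))) :=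
    fun i hi => hstepsn i (by omega) hi
  have hcompd : IsComp ρ p n d e :=
    ⟨hn, by rw [hd0], fun i hi =>
      ⟨fun het => ((hsteps' i hi).1 het).1, fun hef => (hsteps' i hi).2 hef⟩⟩
  have henvd : EnvC R n d e := fun i hi het => ((hsteps' i hi).1 het).2
  obtain ⟨hout, hprog⟩ := hH n d e hcompd henvd (by rw [hd0]; exact hPa0)
  constructor
  · intro i hi hskip hfirst
    have hXi := (hinv' i hi).1
    rw [hskip] at hXi
    have hdskip : (d i).1 = Lang.skip := hsim.2.2 _ hXi
    have hQ : Q (d i).2 := by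
      refine hout i hi hdskip ?_
      intro j hj hdj
      have hXj := (hinv' j (by omega)).1
      rw [hdj] at hXj
      exact hfirst j hj (hsim.2.1 _ hXj)
    exact h3 _ _ hQ (hinv' i hi).2
  · intro i hi hef
    exact h4 _ _ _ _ (hinv' i (by omega)).2 (hprog i hi hef) (hinv' (i+1) (by omega)).2
end

section
/- Rely/guarantee rule for parallel composition: let I = {1,…,m} with m > 0, let G be a reflexive state relation, and assume (1) P ⊆ ⋂_{k∈I} P_k; (2) R ⊆ ⋂_{k∈I} R_k; (3) for every k ∈ I, ρ ⊨ {R_k, P_k} p_k {Q_k, (⋂_{l∈I∖{k}} R_l) ∩ G}; (4) for every k ∈ I, R_k '' Q_k ⊆ Q_k (stability of Q_k under R_k); (5) ⋂_{k∈I} Q_k ⊆ Q. Then ρ ⊨ {R, P} Parallel [p₁,…,pₘ] {Q, G}. -/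
/-! ### Auxiliary definitions for the parallel rule -/

/-- The step from `c i` to `c (i+1)` is a parallel program step that updates
component `j`. -/
def parPP {α : Type} (ρ : ℕ → Lang α) (c : ℕ → Lang α × α) (i j : ℕ) : Prop :=
  ∃ (l : List (Lang α)) (p' : Lang α) (hj : j < l.length),
    (c i).1 = Lang.par l ∧ (c (i+1)).1 = Lang.par (l.set j p') ∧
    PStep ρ (l.get ⟨j, hj⟩, (c i).2) (p', (c (i+1)).2)

/-- A choice of an updated component at step `i`. -/
noncomputable def parJ {α : Type} (ρ : ℕ → Lang α) (c : ℕ → Lang α × α)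
    (i : ℕ) : ℕ :=
  Classical.epsilon (parPP ρ c i)

open Classical in
/-- Environment flags of the `k`-th projected computation. -/
noncomputable def parE {α : Type} (ρ : ℕ → Lang α) (c : ℕ → Lang α × α)
    (e : ℕ → Bool) (k : ℕ) (i : ℕ) : Bool :=
  if e i = false ∧ (∃ j, parPP ρ c i j) ∧ parJ ρ c i = k then false else true

/-- The `k`-th component of a program. -/
def parComp {α : Type} (k : ℕ) (q : Lang α) : Lang α :=
  match q with
  | Lang.par l => l.getD k Lang.skip
  | _ => Lang.skip

/-- The `k`-th projected computation. -/
noncomputable def parCk {α : Type} (c : ℕ → Lang α × α) (k : ℕ) (i : ℕ) :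
    Lang α × α :=
  (parComp k (c i).1, (c i).2)

lemma parE_eq_false {α : Type} {ρ : ℕ → Lang α} {c : ℕ → Lang α × α}
    {e : ℕ → Bool} {k i : ℕ} :
    parE ρ c e k i = false ↔
      (e i = false ∧ (∃ j, parPP ρ c i j) ∧ parJ ρ c i = k) := by
  unfold parE
  split
  · simp_all
  · next h => simp only [Bool.true_eq_false, false_iff]; exact h

lemma noPStep_skip {α : Type} {ρ : ℕ → Lang α} {σ : α} {d : Lang α × α}
    (h : PStep ρ (Lang.skip, σ) d) : False := by
  nomatch h
theorem parallel_rule {α : Type} (ρ : ℕ → Lang α) (m : ℕ) (hm : 0 < m)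
    (G : α → α → Prop) (hGrefl : ∀ a, G a a)
    (R : α → α → Prop) (P Q : α → Prop)
    (Rs : Fin m → α → α → Prop) (Ps Qs : Fin m → α → Prop)
    (p : Fin m → Lang α)
    (h1 : ∀ σ, P σ → ∀ k, Ps k σ)
    (h2 : ∀ σ σ', R σ σ' → ∀ k, Rs k σ σ')
    (h3 : ∀ k, HoareValid ρ (Rs k) (Ps k) (p k) (Qs k)
            (fun σ σ' => (∀ l, l ≠ k → Rs l σ σ') ∧ G σ σ'))
    (h4 : ∀ k σ σ', Qs k σ → Rs k σ σ' → Qs k σ')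
    (h5 : ∀ σ, (∀ k, Qs k σ) → Q σ) :
    HoareValid ρ R P (Lang.par (List.ofFn p)) Q G := by  classical
  intro n c e hcomp henv hP
  obtain ⟨hn0, hc0, hst⟩ := hcomp
  -- skip persists
  have hskip1 : ∀ i, i + 1 < n → (c i).1 = Lang.skip → (c (i+1)).1 = Lang.skip := by
    intro i hi hsk
    rcases hbe : e i with _ | _
    · exfalso
      have hp := (hst i hi).2 hbe
      have hci : c i = (Lang.skip, (c i).2) := by rw [← hsk]
      rw [hci] at hp
      exact noPStep_skip hp
    · rw [(hst i hi).1 hbe, hsk]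
  have hskip : ∀ i j, i ≤ j → j < n → (c i).1 = Lang.skip → (c j).1 = Lang.skip := by
    intro i j hij hj hsk
    induction j, hij using Nat.le_induction with
    | base => exact hsk
    | succ j hij IH => exact hskip1 j hj (IH (by omega))
  -- shape invariant
  have hpar : ∀ i, i < n → (c i).1 = Lang.skip ∨
      ∃ l, (c i).1 = Lang.par l ∧ l.length = m := by
    intro i hi
    induction i with
    | zero => exact Or.inr ⟨List.ofFn p, hc0, by simp⟩
    | succ i IH =>
      rcases IH (by omega) with hsk | ⟨l, hl, hlen⟩
      · exact Or.inl (hskip1 i hi hsk)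
      · rcases hbe : e i with _ | _
        · have hp := (hst i hi).2 hbe
          have hci : c i = (Lang.par l, (c i).2) := by rw [← hl]
          rw [hci] at hp
          rcases hq : c (i+1) with ⟨q', σ'⟩
          rw [hq] at hp
          cases hp with
          | par hj hstep => exact Or.inr ⟨_, rfl, by simp [hlen]⟩
          | parSkip hne hall => exact Or.inl rfl
        · rw [(hst i hi).1 hbe]
          exact Or.inr ⟨l, hl, hlen⟩
  -- inversion of a program step from a parallel program
  have hinv : ∀ i, i + 1 < n → e i = false → ∀ l, (c i).1 = Lang.par l →
      (∃ j, parPP ρ c i j) ∨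
      ((c (i+1)).1 = Lang.skip ∧ (c (i+1)).2 = (c i).2 ∧
        ∀ q ∈ l, q = Lang.skip) := by
    intro i hi hbe l hl
    have hp := (hst i hi).2 hbe
    have hci : c i = (Lang.par l, (c i).2) := by rw [← hl]
    rw [hci] at hp
    rcases hq : c (i+1) with ⟨q', σ'⟩
    rw [hq] at hp
    cases hp with
    | par hj hstep =>
      exact Or.inl ⟨_, l, _, hj, hl, by rw [hq], by rw [hq]; exact hstep⟩
    | parSkip hne hall => exact Or.inr ⟨rfl, rfl, hall⟩
  -- projected computations take correct steps (before global skip)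
  have hproj : ∀ (k : Fin m) i, i + 1 < n → (c (i+1)).1 ≠ Lang.skip →
      (parE ρ c e ↑k i = true → (parCk c ↑k (i+1)).1 = (parCk c ↑k i).1) ∧
      (parE ρ c e ↑k i = false → PStep ρ (parCk c ↑k i) (parCk c ↑k (i+1))) := by
    intro k i hi hne
    rcases hbe : e i with _ | _
    swap
    · -- environment step
      have hEt : parE ρ c e ↑k i = true := by
        rcases h : parE ρ c e ↑k i with _ | _
        · exfalso; have := (parE_eq_false.mp h).1; simp [hbe] at this
        · rfl
      refine ⟨fun _ => ?_, fun h => by simp [hEt] at h⟩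
      simp only [parCk]
      rw [(hst i hi).1 hbe]
    · -- program step
      have hcs : (c i).1 ≠ Lang.skip := fun hsk => hne (hskip1 i hi hsk)
      rcases hpar i (by omega) with hsk | ⟨l, hl, hlen⟩
      · exact absurd hsk hcs
      rcases hinv i hi hbe l hl with hex | ⟨hq, _, _⟩
      swap
      · exact absurd hq hne
      have hPJ : parPP ρ c i (parJ ρ c i) := Classical.epsilon_spec hex
      obtain ⟨l₀, p', hj, hl₀, hl₁, hstep⟩ := hPJ
      obtain rfl : l₀ = l := by
        have := hl₀.symm.trans hl
        injection this with h
      by_cases hk : parJ ρ c i = (k : ℕ)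
      · -- component k steps
        have hEf : parE ρ c e ↑k i = false :=
          parE_eq_false.mpr ⟨hbe, hex, hk⟩
        refine ⟨fun h => by simp [hEf] at h, fun _ => ?_⟩
        simp only [parCk, hl₀, hl₁, parComp]
        have e1 : l₀.getD ↑k Lang.skip = l₀.get ⟨parJ ρ c i, hj⟩ := by
          rw [List.getD_eq_getElem _ _ (hk ▸ hj)]
          simp [hk]
        have e2 : (l₀.set (parJ ρ c i) p').getD ↑k Lang.skip = p' := by
          rw [List.getD_eq_getElem _ _ (by simpa using hk ▸ hj)]
          simp [← hk]
        rw [e1, e2]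
        exact hstep
      · -- another component steps: k's program is unchanged
        have hEt : parE ρ c e ↑k i = true := by
          rcases h : parE ρ c e ↑k i with _ | _
          · exact absurd (parE_eq_false.mp h).2.2 hk
          · rfl
        refine ⟨fun _ => ?_, fun h => by simp [hEt] at h⟩
        simp only [parCk, hl₀, hl₁, parComp]
        by_cases hkl : (k : ℕ) < l₀.length
        · rw [List.getD_eq_getElem _ _ (by simpa using hkl),
            List.getD_eq_getElem _ _ hkl]
          exact List.getElem_set_ne hk _
        · rw [List.getD_eq_default _ _ (by simpa using hkl),
            List.getD_eq_default _ _ (by omega)]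
  -- the projections are computations
  have hIsComp : ∀ (k : Fin m) L, 0 < L → L ≤ n →
      (∀ i, i + 1 < L → (c (i+1)).1 ≠ Lang.skip) →
      IsComp ρ (p k) L (parCk c ↑k) (parE ρ c e ↑k) := by
    intro k L hL0 hLn hns
    refine ⟨hL0, ?_, fun i hi => hproj k i (by omega) (hns i hi)⟩
    simp only [parCk, hc0, parComp]
    rw [List.getD_eq_getElem _ _ (by simp)]
    simp
  -- the big induction: environment conditions of projections, and guarantee
  have hbig : ∀ i,
      (i + 1 < n → (c (i+1)).1 ≠ Lang.skip →
        ∀ k : Fin m, parE ρ c e ↑k i = true → Rs k (c i).2 (c (i+1)).2) ∧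
      (i + 1 < n → e i = false → G (c i).2 (c (i+1)).2) := by
    intro i
    induction i using Nat.strong_induction_on with
    | _ i IH =>
      rcases hbe : e i with _ | _
      swap
      · -- environment step
        exact ⟨fun hi _ k _ => h2 _ _ (henv i hi hbe) k,
          fun _ h => by simp [hbe] at h⟩
      by_cases hcskip : (c i).1 = Lang.skip
      · -- program step from skip is impossible
        refine ⟨fun hi hne _ _ => absurd (hskip1 i hi hcskip) hne,
          fun hi _ => ?_⟩
        exfalso
        have hp := (hst i hi).2 hbe
        have hci : c i = (Lang.skip, (c i).2) := by rw [← hcskip]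
        rw [hci] at hp
        exact noPStep_skip hp
      by_cases hin : i + 1 < n
      swap
      · exact ⟨fun hi => absurd hi hin, fun hi => absurd hi hin⟩
      rcases hpar i (by omega) with hsk | ⟨l, hl, hlen⟩
      · exact absurd hsk hcskip
      rcases hinv i hin hbe l hl with hex | ⟨hq1, hq2, hall⟩
      swap
      · -- step to skip: state unchanged, G by reflexivity
        refine ⟨fun _ hne _ _ => absurd hq1 hne, fun _ _ => ?_⟩
        rw [hq2]
        exact hGrefl _
      -- one component steps: apply its Hoare triple to the prefix
      have hPJ : parPP ρ c i (parJ ρ c i) := Classical.epsilon_spec hex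
      obtain ⟨l₀, p', hj, hl₀, hl₁, hstep⟩ := hPJ
      obtain rfl : l₀ = l := by
        have := hl₀.symm.trans hl
        injection this with h
      set kF : Fin m := ⟨parJ ρ c i, hlen ▸ hj⟩ with hkF
      have hEf : parE ρ c e ↑kF i = false :=
        parE_eq_false.mpr ⟨hbe, hex, rfl⟩
      have hnsk : ∀ j, j + 1 < i + 2 → (c (j+1)).1 ≠ Lang.skip := by
        intro j hj' hskj
        rcases Nat.lt_or_ge (j+1) (i+1) with h' | h'
        · exact hcskip (hskip (j+1) i (by omega) (by omega) hskj)
        · have : j = i := by omega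
          subst this
          rw [hl₁] at hskj
          exact nomatch hskj
      have hIC := hIsComp kF (i+2) (by omega) (by omega) hnsk
      have hEnv : EnvC (Rs kF) (i+2) (parCk c ↑kF) (parE ρ c e ↑kF) := by
        intro j hj' hEt'
        rcases Nat.lt_or_ge j i with h' | h'
        · exact (IH j h').1 (by omega) (hnsk j (by omega)) kF hEt'
        · have : j = i := by omega
          subst this
          rw [hEf] at hEt'
          exact Bool.noConfusion hEt'
      obtain ⟨-, hpr⟩ := h3 kF (i+2) _ _ hIC hEnv (h1 _ hP kF)
      have hg := hpr i (by omega) hEf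
      refine ⟨fun _ _ k hEt => ?_, fun _ _ => hg.2⟩
      have hkne : k ≠ kF := by
        rintro rfl
        rw [hEf] at hEt
        exact Bool.noConfusion hEt
      exact hg.1 k hkne
  -- conclude
  refine ⟨?_, fun i hi hbe => (hbig i).2 hi hbe⟩
  intro i hi hiskip hmin
  have hi0 : 0 < i := by
    rcases Nat.eq_zero_or_pos i with rfl | h
    · rw [hc0] at hiskip
      exact absurd hiskip (by simp)
    · exact h
  obtain ⟨t, rfl⟩ : ∃ t, i = t + 1 := ⟨i - 1, by omega⟩
  have hts : (c t).1 ≠ Lang.skip := hmin t (by omega)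
  have hbet : e t = false := by
    rcases hbe : e t with _ | _
    · rfl
    · exact absurd (((hst t hi).1 hbe).symm.trans hiskip) hts
  rcases hpar t (by omega) with hsk | ⟨l, hl, hlen⟩
  · exact absurd hsk hts
  rcases hinv t hi hbet l hl with hex | ⟨hq1, hq2, hall⟩
  · exfalso
    have hPJ : parPP ρ c t (parJ ρ c t) := Classical.epsilon_spec hex
    obtain ⟨l₀, p', hj, hl₀, hl₁, hstep⟩ := hPJ
    rw [hiskip] at hl₁
    exact nomatch hl₁
  rw [hq2]
  apply h5
  intro k
  have hIC := hIsComp k (t+1) (by omega) (by omega)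
    (fun j hj => hmin (j+1) (by omega))
  have hEnv : EnvC (Rs k) (t+1) (parCk c ↑k) (parE ρ c e ↑k) := by
    intro j hj hEt
    exact (hbig j).1 (by omega) (hmin (j+1) (by omega)) k hEt
  obtain ⟨hout, -⟩ := h3 k (t+1) _ _ hIC hEnv (h1 _ hP k)
  -- the first index where component k is skip
  have hkex : ∃ s, (parCk c ↑k s).1 = Lang.skip := by
    refine ⟨t, ?_⟩
    simp only [parCk, hl, parComp]
    rw [List.getD_eq_getElem _ _ (by omega)]
    exact hall _ (List.getElem_mem _)
  set s := Nat.find hkex with hs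
  have hs_skip : (parCk c ↑k s).1 = Lang.skip := Nat.find_spec hkex
  have hs_le : s ≤ t := by
    apply Nat.find_min' hkex
    simp only [parCk, hl, parComp]
    rw [List.getD_eq_getElem _ _ (by omega)]
    exact hall _ (List.getElem_mem _)
  have hs_min : ∀ j, j < s → (parCk c ↑k j).1 ≠ Lang.skip :=
    fun j hj => Nat.find_min hkex hj
  have hQs : Qs k (c s).2 := hout s (by omega) hs_skip hs_min
  -- propagate Qs k from s to t using stability under Rs k
  have hpropa : ∀ j, s ≤ j → j ≤ t →
      (parCk c ↑k j).1 = Lang.skip ∧ Qs k (c j).2 := by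
    intro j hsj
    induction j, hsj using Nat.le_induction with
    | base => exact fun _ => ⟨hs_skip, hQs⟩
    | succ j hsj IH =>
      intro hjt
      obtain ⟨hskj, hQj⟩ := IH (by omega)
      have hj1 : j + 1 < n := by omega
      have hnej : (c (j+1)).1 ≠ Lang.skip := hmin (j+1) (by omega)
      rcases hEb : parE ρ c e ↑k j with _ | _
      · exfalso
        have hps := (hproj k j hj1 hnej).2 hEb
        simp only [parCk] at hskj
        simp only [parCk, hskj] at hps
        exact noPStep_skip hps
      · have hpres := (hproj k j hj1 hnej).1 hEb
        have hR := (hbig j).1 hj1 hnej k hEb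
        exact ⟨by rw [hpres]; exact hskj, h4 k _ _ hQj hR⟩
  exact (hpropa t hs_le (le_refl t)).2
end

section
/- Rely/guarantee rule for await-statements: assume (1) R '' P ⊆ P (stability of P under R), and (2) for every state σ, ρ ⊨ {⊥, P ∩ C ∩ {σ}} p { {σ' | σ' ∈ Q ∧ (σ,σ') ∈ G}, ⊤ }, where ⊥ is the empty state relation and ⊤ is the universal state relation. Then ρ ⊨ {R, P} await C p {Q, G}. -/
theorem skip_no_step {α : Type} {ρ : ℕ → Lang α} {σ : α} {x : Lang α × α} :
    ¬ PStep ρ (Lang.skip, σ) x := fun h => by cases h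

theorem skip_no_step' {α : Type} {ρ : ℕ → Lang α} {y x : Lang α × α}
    (hy : y.1 = Lang.skip) : ¬ PStep ρ y x := by
  intro h
  have : y = (Lang.skip, y.2) := Prod.ext hy rfl
  rw [this] at h
  exact skip_no_step h

theorem await_step_inv {α : Type} {ρ : ℕ → Lang α} {C : α → Prop}
    {p : Lang α} {σ : α} {x : Lang α × α}
    (h : PStep ρ (Lang.await C p, σ) x) :
    C σ ∧ ∃ (σ' : α) (n : ℕ) (f : ℕ → Lang α × α), x = (Lang.skip, σ') ∧ f 0 = (p, σ) ∧
      f n = (Lang.skip, σ') ∧ ∀ i, i < n → PStep ρ (f i) (f (i + 1)) := by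
  cases h with
  | await hC n f h0 hn hstep => exact ⟨hC, _, n, f, rfl, h0, hn, hstep⟩

theorem inner_aux {α : Type} {ρ : ℕ → Lang α} {G : α → α → Prop}
    {P Q C : α → Prop} {p : Lang α}
    (h2 : ∀ σ : α, HoareValid ρ (fun _ _ => False)
            (fun s => P s ∧ C s ∧ s = σ) p
            (fun σ' => Q σ' ∧ G σ σ') (fun _ _ => True))
    {σ σ' : α} (hP : P σ) (hC : C σ) (n : ℕ) (f : ℕ → Lang α × α)
    (h0 : f 0 = (p, σ)) (hn : f n = (Lang.skip, σ'))
    (hstep : ∀ i, i < n → PStep ρ (f i) (f (i + 1))) :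
    Q σ' ∧ G σ σ' := by
  have hcomp : IsComp ρ p (n + 1) f (fun _ => false) := by
    refine ⟨Nat.succ_pos n, by rw [h0], fun i hi => ⟨fun h => by simp at h,
      fun _ => hstep i (Nat.lt_of_succ_lt_succ hi)⟩⟩
  have henv : EnvC (fun _ _ => False) (n + 1) f (fun _ => false) :=
    fun i _ h => by simp at h
  have hPin : P (f 0).2 ∧ C (f 0).2 ∧ (f 0).2 = σ := by
    rw [h0]; exact ⟨hP, hC, rfl⟩
  have hout := (h2 σ (n + 1) f (fun _ => false) hcomp henv hPin).1
  have := hout n (Nat.lt_succ_self n) (by rw [hn])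
    (fun j hj hsk => skip_no_step' hsk (hstep j hj))
  rw [hn] at this
  exact this

theorem await_rule {α : Type} (ρ : ℕ → Lang α)
    (R G : α → α → Prop) (P Q C : α → Prop) (p : Lang α)
    (h1 : ∀ σ σ', P σ → R σ σ' → P σ')
    (h2 : ∀ σ : α, HoareValid ρ (fun _ _ => False)
            (fun s => P s ∧ C s ∧ s = σ) p
            (fun σ' => Q σ' ∧ G σ σ') (fun _ _ => True)) :
    HoareValid ρ R P (Lang.await C p) Q G := by
  intro n c e hcomp henv hP
  obtain ⟨hn0, hc0, hstep⟩ := hcomp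
  -- Claim C: if all steps before i are environment steps, prog = await and P holds
  have claimC : ∀ i, i < n → (∀ j, j < i → e j = true) →
      (c i).1 = Lang.await C p ∧ P (c i).2 := by
    intro i
    induction i with
    | zero => intro _ _; exact ⟨hc0, hP⟩
    | succ k ih =>
      intro hk hall
      have hik : k < n := Nat.lt_of_succ_lt hk
      obtain ⟨hprog, hPk⟩ := ih hik (fun j hj => hall j (Nat.lt_succ_of_lt hj))
      have hek : e k = true := hall k (Nat.lt_succ_self k)
      have heq : (c (k + 1)).1 = (c k).1 := (hstep k hk).1 hek
      have hR : R (c k).2 (c (k + 1)).2 := henv k hk hek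
      exact ⟨heq.trans hprog, h1 _ _ hPk hR⟩
  -- Claim B: after the first program step, prog = skip forever
  have claimB : ∀ j, j + 1 < n → (∀ m, m < j → e m = true) → e j = false →
      ∀ i, j < i → i < n → (c i).1 = Lang.skip := by
    intro j hj hall hej i hji hin
    obtain ⟨hprog, _⟩ := claimC j (Nat.lt_of_succ_lt hj) hall
    have hst : PStep ρ (c j) (c (j + 1)) := (hstep j hj).2 hej
    have hcj : c j = (Lang.await C p, (c j).2) := Prod.ext hprog rfl
    rw [hcj] at hst
    obtain ⟨_, σ', _, _, hx, _, _, _⟩ := await_step_inv hst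
    have hbase : (c (j + 1)).1 = Lang.skip := by rw [hx]
    have : ∀ k, j + 1 + k < n → (c (j + 1 + k)).1 = Lang.skip := by
      intro k
      induction k with
      | zero => intro _; exact hbase
      | succ m ihm =>
        intro hlt
        have hm : j + 1 + m < n := by omega
        have hskipm := ihm hm
        have hlt' : (j + 1 + m) + 1 < n := by omega
        cases he : e (j + 1 + m) with
        | true =>
          have := (hstep _ hlt').1 he
          rw [show j + 1 + (m + 1) = (j + 1 + m) + 1 by omega, this]
          exact hskipm
        | false =>
          exact absurd ((hstep _ hlt').2 he) (skip_no_step' hskipm)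
    have := this (i - (j + 1)) (by omega)
    rwa [show j + 1 + (i - (j + 1)) = i by omega] at this
  -- From existence of an earlier program step, prog = skip
  have claimB' : ∀ i, i < n → (∃ m, m < i ∧ e m = false) →
      (c i).1 = Lang.skip := by
    intro i hin hex
    have hfind := Nat.find_spec hex
    refine claimB (Nat.find hex) (by omega) ?_ hfind.2 i hfind.1 hin
    intro m hm
    have := Nat.find_min hex hm
    by_contra hne
    exact this ⟨lt_trans hm hfind.1, by simpa using hne⟩
  constructor
  · -- OutC
    intro i hi hskip hpre
    cases i with
    | zero => rw [hc0] at hskip; exact absurd hskip (by simp)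
    | succ k =>
      have hkn : k + 1 < n := hi
      -- all steps before k are env steps
      have hall : ∀ m, m < k → e m = true := by
        intro m hm
        by_contra hne
        have : (c k).1 = Lang.skip :=
          claimB' k (by omega) ⟨m, hm, by simpa using hne⟩
        exact hpre k (Nat.lt_succ_self k) this
      obtain ⟨hprog, hPk⟩ := claimC k (by omega) hall
      have hek : e k = false := by
        cases he : e k with
        | false => rfl
        | true =>
          have := (hstep k hkn).1 he
          rw [this, hprog] at hskip
          exact absurd hskip (by simp)
      have hst : PStep ρ (c k) (c (k + 1)) := (hstep k hkn).2 hek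
      have hcj : c k = (Lang.await C p, (c k).2) := Prod.ext hprog rfl
      rw [hcj] at hst
      obtain ⟨hC, σ', m, f, hx, h0, hm, hsteps⟩ := await_step_inv hst
      have := inner_aux h2 hPk hC m f h0 hm hsteps
      have h2' : (c (k + 1)).2 = σ' := by rw [hx]
      rw [h2']
      exact this.1
  · -- ProgC
    intro i hi hei
    have hall : ∀ m, m < i → e m = true := by
      intro m hm
      by_contra hne
      have hsk : (c i).1 = Lang.skip :=
        claimB' i (by omega) ⟨m, hm, by simpa using hne⟩
      exact skip_no_step' hsk ((hstep i hi).2 hei)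
    obtain ⟨hprog, hPk⟩ := claimC i (by omega) hall
    have hst : PStep ρ (c i) (c (i + 1)) := (hstep i hi).2 hei
    have hcj : c i = (Lang.await C p, (c i).2) := Prod.ext hprog rfl
    rw [hcj] at hst
    obtain ⟨hC, σ', m, f, hx, h0, hm, hsteps⟩ := await_step_inv hst
    have := inner_aux h2 hPk hC m f h0 hm hsteps
    have h2' : (c (i + 1)).2 = σ' := by rw [hx]
    rw [h2']
    exact this.2
end
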